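/- Let K ⊆ L be fields of characteristic p > 0, let A and B be n × n matrices with entries in K, at least one of which is invertible, and let w ∈ K^n be a column vector. Suppose v ∈ L^n is a vector such that A v^σ + B v = w, where v^σ denotes the vector obtained from v by raising each entry to the p-th power. Then every entry of v is algebraic over K. -/

import Mathlib

lemma semilinear_key {K L : Type*} [Field K] [Field L] [Algebra K L] {n : ℕ}
    (A B : Matrix (Fin n) (Fin n) K) (hA : IsUnit A.det) (w : Fin n → K)
    (x z : Fin n → L)
    (h : ∀ i, (∑ j, algebraMap K L (A i j) * x j) + (∑ j, algebraMap K L (B i j) * z j)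
      = algebraMap K L (w i)) :
    ∀ j, ∃ (c₀ : K) (c : Fin n → K),
      x j = algebraMap K L c₀ + ∑ l, algebraMap K L (c l) * z l := by
  intro j
  set φ := algebraMap K L
  set A' : Matrix (Fin n) (Fin n) L := A.map φ with hA'def
  have hA' : IsUnit A'.det := by
    have hdet : (A.map (φ : K → L)).det = φ A.det := by
      rw [← RingHom.mapMatrix_apply, ← RingHom.map_det]
    rw [hA'def, hdet]
    exact hA.map φ
  set y : Fin n → L := fun i => φ (w i) - ∑ l, φ (B i l) * z l with hy
  have hmv : A'.mulVec x = y := by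
    funext i
    simp only [Matrix.mulVec, dotProduct, hy, hA'def, Matrix.map_apply]
    rw [eq_sub_iff_add_eq]
    exact h i
  have hinv : A'⁻¹ = (A⁻¹).map φ := by
    apply Matrix.inv_eq_left_inv
    have : A⁻¹ * A = 1 := Matrix.nonsing_inv_mul A hA
    calc (A⁻¹).map φ * A' = ((A⁻¹) * A).map φ := by
          rw [Matrix.map_mul]
        _ = 1 := by rw [this, Matrix.map_one φ (map_zero φ) (map_one φ)]
  have hx : x = ((A⁻¹).map φ).mulVec y := by
    rw [← hinv, ← hmv, Matrix.mulVec_mulVec, Matrix.nonsing_inv_mul A' hA',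
      Matrix.one_mulVec]
  refine ⟨∑ i, A⁻¹ j i * w i, fun l => -∑ i, A⁻¹ j i * B i l, ?_⟩
  have := congrFun hx j
  rw [this]
  simp only [Matrix.mulVec, dotProduct, Matrix.map_apply, hy, map_sum, map_mul,
    map_neg, mul_sub, Finset.mul_sum, Finset.sum_sub_distrib, neg_mul, Finset.sum_neg_distrib]
  rw [sub_eq_add_neg]
  congr 1
  rw [neg_inj, Finset.sum_comm]
  refine Finset.sum_congr rfl fun l _ => ?_
  rw [Finset.sum_mul]
  exact Finset.sum_congr rfl fun i _ => by ring

lemma semilinear_caseA {p : ℕ} (hp : p.Prime) {K L : Type*} [Field K] [Field L]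
    [Algebra K L] [CharP K p] {n : ℕ} (v : Fin n → L)
    (hpow : ∀ j, ∃ (c₀ : K) (c : Fin n → K),
      v j ^ p = algebraMap K L c₀ + ∑ l, algebraMap K L (c l) * v l) :
    ∀ i, IsAlgebraic K (v i) := by
  haveI : Fact p.Prime := ⟨hp⟩
  haveI hLp : CharP L p := charP_of_injective_algebraMap (algebraMap K L).injective p
  intro i
  set S : Set L := insert 1 (Set.range v) with hS
  set V : Submodule K L := Submodule.span K S with hV
  have h1 : (1 : L) ∈ V := Submodule.subset_span (Set.mem_insert _ _)
  have hvV : ∀ j, v j ∈ V := fun j =>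
    Submodule.subset_span (Set.mem_insert_of_mem _ ⟨j, rfl⟩)
  have haff : ∀ (c₀ : K) (c : Fin n → K),
      algebraMap K L c₀ + ∑ l, algebraMap K L (c l) * v l ∈ V := by
    intro c₀ c
    refine V.add_mem ?_ (Submodule.sum_mem _ fun l _ => ?_)
    · have : algebraMap K L c₀ = c₀ • (1 : L) := by
        rw [Algebra.smul_def, mul_one]
      rw [this]; exact V.smul_mem _ h1
    · have : algebraMap K L (c l) * v l = c l • v l := (Algebra.smul_def _ _).symm
      rw [this]; exact V.smul_mem _ (hvV l)
  have hpV : ∀ j, v j ^ p ∈ V := by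
    intro j
    obtain ⟨c₀, c, hc⟩ := hpow j
    rw [hc]; exact haff c₀ c
  have hfrob : ∀ x ∈ V, x ^ p ∈ V := by
    intro x hx
    induction hx using Submodule.span_induction with
    | mem s hs =>
      rcases hs with rfl | ⟨j, rfl⟩
      · rw [one_pow]; exact h1
      · exact hpV j
    | zero => rw [zero_pow hp.ne_zero]; exact V.zero_mem
    | add a b _ _ ha hb => rw [add_pow_char]; exact V.add_mem ha hb
    | smul c a _ ha => rw [smul_pow]; exact V.smul_mem _ ha
  have hiter : ∀ k : ℕ, v i ^ p ^ k ∈ V := by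
    intro k
    induction k with
    | zero => simpa using hvV i
    | succ k ih =>
      rw [pow_succ, pow_mul]
      exact hfrob _ ih
  -- finite dimensionality
  have hSfin : S.Finite := (Set.finite_range v).insert 1
  haveI : Module.Finite K V := by
    rw [hV]
    exact FiniteDimensional.span_of_finite K hSfin
  set d : ℕ := Module.finrank K V with hd
  set y : Fin (d + 1) → V := fun k => ⟨v i ^ p ^ (k : ℕ), hiter k⟩ with hy
  have hdep : ¬ LinearIndependent K y := by
    intro hli
    have := hli.fintype_card_le_finrank
    simp [hd] at this
  rw [Fintype.not_linearIndependent_iff] at hdep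
  obtain ⟨g, hg, k0, hk0⟩ := hdep
  have hgL : ∑ k, algebraMap K L (g k) * v i ^ p ^ (k : ℕ) = 0 := by
    have := congrArg (Subtype.val) hg
    simpa [hy, Algebra.smul_def] using this
  set P : Polynomial K := ∑ k : Fin (d + 1), Polynomial.monomial (p ^ (k : ℕ)) (g k) with hP
  have hcoeff : P.coeff (p ^ (k0 : ℕ)) = g k0 := by
    rw [hP, Polynomial.finset_sum_coeff]
    rw [Finset.sum_eq_single k0]
    · rw [Polynomial.coeff_monomial, if_pos rfl]
    · intro b _ hb
      rw [Polynomial.coeff_monomial, if_neg]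
      intro h
      exact hb (Fin.ext (Nat.pow_right_injective hp.two_le h))
    · intro h; exact absurd (Finset.mem_univ k0) h
  refine ⟨P, fun h0 => hk0 ?_, ?_⟩
  · rw [← hcoeff, h0, Polynomial.coeff_zero]
  · rw [hP]
    rw [map_sum]
    simpa [Polynomial.aeval_monomial, Algebra.smul_def] using hgL

set_option maxHeartbeats 4000000 in
set_option synthInstance.maxHeartbeats 1000000 in
open IntermediateField in
lemma semilinear_caseB {p : ℕ} (hp : p.Prime) {L : Type*} [Field L] [CharP L p]
    (K : Subfield L) {n : ℕ} (v : Fin n → L)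
    (hrel : ∀ j, ∃ (c₀ : K) (c : Fin n → K),
      v j = (c₀ : L) + ∑ l, (c l : L) * v l ^ p) :
    ∀ i, IsAlgebraic K (v i) := by
  classical
  intro i
  set F : IntermediateField K L := IntermediateField.adjoin K (Set.range v) with hF
  have hvF : ∀ j, v j ∈ F := fun j =>
    IntermediateField.subset_adjoin _ _ ⟨j, rfl⟩
  set g : Fin n → F := fun j => ⟨v j, hvF j⟩ with hg
  set ψ : MvPolynomial (Fin n) K →ₐ[K] F := MvPolynomial.aeval g with hψ
  have hψval : ∀ r, (ψ r : L) = MvPolynomial.aeval v r := by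
    intro r
    have : (F.val.comp ψ) r = MvPolynomial.aeval v r := by
      rw [hψ, MvPolynomial.comp_aeval]
      rfl
    exact this
  have hdecomp : ∀ x : F, ∃ r s : MvPolynomial (Fin n) K,
      (x : L) = MvPolynomial.aeval v r / MvPolynomial.aeval v s := by
    intro x
    exact (IntermediateField.mem_adjoin_range_iff K v (x : L)).mp (hF ▸ x.2)
  have hψmem : ∀ r, ψ r ∈ Algebra.adjoin K (Set.range g) := by
    intro r
    rw [Algebra.adjoin_range_eq_range_aeval]
    exact ⟨r, rfl⟩
  -- EssFiniteType
  haveI hEFT : Algebra.EssFiniteType K F := by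
    rw [Algebra.essFiniteType_iff]
    refine ⟨Finset.univ.image g, fun s => ?_⟩
    have hcoe : ((Finset.univ.image g : Finset F) : Set F) = Set.range g := by
      simp
    rw [hcoe]
    obtain ⟨r, s', hx⟩ := hdecomp s
    by_cases hz : ψ s' = 0
    · refine ⟨1, Subalgebra.one_mem _, isUnit_one, ?_⟩
      have : (s : L) = 0 := by
        rw [hx]
        have : MvPolynomial.aeval v s' = 0 := by rw [← hψval, hz]; simp
        rw [this, div_zero]
      have hs0 : s = 0 := Subtype.ext this
      rw [hs0, zero_mul]
      exact Subalgebra.zero_mem _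
    · refine ⟨ψ s', hψmem s', isUnit_iff_ne_zero.mpr hz, ?_⟩
      have hs'ne : (MvPolynomial.aeval v s' : L) ≠ 0 := by
        rw [← hψval]
        intro h
        exact hz (Subtype.ext (by simpa using h))
      have : s * ψ s' = ψ r := by
        apply Subtype.ext
        push_cast
        rw [hψval, hψval, hx, div_mul_cancel₀ _ hs'ne]
      rw [this]
      exact hψmem r
  -- Derivation vanishing
  haveI : CharP F p := IntermediateField.charP' F p
  set D := KaehlerDifferential.D K F with hD
  have hDpow : ∀ a : F, D (a ^ p) = 0 := by
    intro a
    rw [Derivation.leibniz_pow, ← Nat.cast_smul_eq_nsmul F, CharP.cast_eq_zero, zero_smul]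
  have hDgen : ∀ j, D (g j) = 0 := by
    intro j
    obtain ⟨c₀, c, hc⟩ := hrel j
    have : g j = algebraMap K F c₀ + ∑ l, algebraMap K F (c l) * g l ^ p := by
      apply Subtype.ext
      push_cast
      exact hc
    rw [this, map_add, Derivation.map_algebraMap, map_sum, zero_add]
    rw [Finset.sum_eq_zero]
    intro l _
    rw [Derivation.leibniz, Derivation.map_algebraMap, hDpow, smul_zero, smul_zero, add_zero]
  have hD0 : ∀ x ∈ Algebra.adjoin K (Set.range g), D x = 0 := by
    intro x hx
    have := Derivation.eqOn_adjoin (R := K) (D1 := D) (D2 := 0)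
      (s := Set.range g) (by rintro _ ⟨j, rfl⟩; simpa using hDgen j) hx
    simpa using this
  have hDall : ∀ x : F, D x = 0 := by
    intro x
    obtain ⟨r, s', hx⟩ := hdecomp x
    by_cases hz : ψ s' = 0
    · have : x = 0 := by
        apply Subtype.ext
        rw [hx]
        have : MvPolynomial.aeval v s' = 0 := by rw [← hψval, hz]; simp
        rw [this, div_zero]; rfl
      rw [this, map_zero]
    · have hs'ne : (MvPolynomial.aeval v s' : L) ≠ 0 := by
        rw [← hψval]
        intro h
        exact hz (Subtype.ext (by simpa using h))
      have hxs : x * ψ s' = ψ r := by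
        apply Subtype.ext
        push_cast
        rw [hψval, hψval, hx, div_mul_cancel₀ _ hs'ne]
      have := congrArg D hxs
      rw [Derivation.leibniz, hD0 _ (hψmem r), hD0 _ (hψmem s'), smul_zero, zero_add] at this
      rcases smul_eq_zero.mp this with h | h
      · exact absurd h hz
      · exact h
  haveI hsub : Subsingleton (Ω[F⁄K]) := by
    have htop : (⊤ : Submodule F (Ω[F⁄K])) = ⊥ := by
      rw [← KaehlerDifferential.span_range_derivation, eq_bot_iff, Submodule.span_le]
      rintro _ ⟨x, rfl⟩
      simp [hDall x]
      exact hDall x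
    constructor
    intro a b
    have ha : a ∈ (⊥ : Submodule F (Ω[F⁄K])) := htop ▸ Submodule.mem_top
    have hb : b ∈ (⊥ : Submodule F (Ω[F⁄K])) := htop ▸ Submodule.mem_top
    rw [Submodule.mem_bot] at ha hb
    rw [ha, hb]
  haveI : Algebra.FormallyUnramified K F := ⟨hsub⟩
  haveI : Algebra.IsSeparable K F :=
    (Algebra.FormallyUnramified.iff_isSeparable K F).mp inferInstance
  haveI : Algebra.IsAlgebraic K F := Algebra.IsSeparable.isAlgebraic K F
  exact IntermediateField.isAlgebraic_iff.mp (Algebra.IsAlgebraic.isAlgebraic (g i))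

/-- Let `K ⊆ L` be fields of characteristic `p > 0`, `A, B` square matrices over `K`
with at least one of them invertible, and `w` a vector over `K`. If `v` is a vector over
`L` with `A v^σ + B v = w` (`σ` the `p`-power Frobenius applied entrywise), then every
entry of `v` is algebraic over `K`. -/
theorem semilinear_system_algebraic (p : ℕ) (hp : p.Prime) (K L : Type*) [Field K]
    [Field L] [Algebra K L] [CharP K p] (n : ℕ)
    (A B : Matrix (Fin n) (Fin n) K) (hAB : IsUnit A.det ∨ IsUnit B.det)
    (w : Fin n → K) (v : Fin n → L)
    (hv : ∀ i, (∑ j, algebraMap K L (A i j) * v j ^ p) +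
      (∑ j, algebraMap K L (B i j) * v j) = algebraMap K L (w i)) :
    ∀ i, IsAlgebraic K (v i) := by
  haveI hLp : CharP L p := charP_of_injective_algebraMap (algebraMap K L).injective p
  rcases hAB with hA | hB
  · exact semilinear_caseA hp v (semilinear_key A B hA w _ v hv)
  · -- B invertible
    have hrel := semilinear_key B A hB w v (fun j => v j ^ p)
      (fun i => by rw [add_comm]; exact hv i)
    set φ := algebraMap K L with hφ
    set K₀ : Subfield L := φ.fieldRange with hK₀
    let e : K ≃+* K₀ := RingEquiv.ofBijective φ.rangeRestrictField
      ⟨fun a b hab => φ.injective (congrArg Subtype.val hab),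
       by rintro ⟨y, x, rfl⟩; exact ⟨x, rfl⟩⟩
    have halg : ∀ i, IsAlgebraic K₀ (v i) := by
      apply semilinear_caseB hp K₀ v
      intro j
      obtain ⟨c₀, c, hc⟩ := hrel j
      exact ⟨⟨φ c₀, c₀, rfl⟩, fun l => ⟨φ (c l), c l, rfl⟩, hc⟩
    intro i
    obtain ⟨P, hP0, hPv⟩ := halg i
    refine ⟨P.map e.symm.toRingHom, ?_, ?_⟩
    · rwa [Ne, Polynomial.map_eq_zero_iff e.symm.injective]
    · have hcomp : (algebraMap K L).comp e.symm.toRingHom = algebraMap K₀ L := by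
        ext b
        have h1 : φ (e.symm b) = ((e (e.symm b) : K₀) : L) := rfl
        rw [RingHom.comp_apply]
        show φ (e.symm b) = algebraMap K₀ L b
        rw [h1, e.apply_symm_apply]
        rfl
      rw [Polynomial.aeval_def, Polynomial.eval₂_map, hcomp, ← Polynomial.aeval_def]
      exact hPv
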